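/- arXiv:2008.05459 — 3 statements merged into one kernel-verified Lean document; each statement's English description precedes it below -/
import Mathlib

section
/- Let μ be a probability measure on a measurable space α, let G be a finite nonempty family of measurable functions g : α → [0, 1], and let N be a positive integer. For every t > 0, the probability, over an i.i.d. sample S = (X_1, …, X_N) drawn from μ^N, that sup_{g∈G} |E_μ[g] − (1/N)Σ_{i=1}^N g(X_i)| exceeds E_S[sup_{g∈G} |E_μ[g] − (1/N)Σ_{i=1}^N g(X_i)|] + t is at most exp(−2·N·t²). -/
open MeasureTheory


open Real in
lemma key_ineq {p : ℝ} (hp0 : 0 ≤ p) (hp1 : p ≤ 1) (h : ℝ) :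
    (1 - p) * Real.exp (-p * h) + p * Real.exp ((1 - p) * h)
      ≤ Real.exp (h ^ 2 / 8) := by
  -- rewrite LHS as exp(-p h) * (1 - p + p exp h)
  have hD : ∀ x : ℝ, 0 < 1 - p + p * Real.exp x := by
    intro x
    rcases eq_or_lt_of_le hp0 with h0 | h0
    · simp [← h0]
    · have := (Real.exp_pos x)
      nlinarith
  set L : ℝ → ℝ := fun x => Real.log (1 - p + p * Real.exp x) with hL
  set q : ℝ → ℝ := fun x => p * Real.exp x / (1 - p + p * Real.exp x) with hq
  set F' : ℝ → ℝ := fun x => p + x / 4 - q x with hF'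
  set F : ℝ → ℝ := fun x => p * x + x ^ 2 / 8 - L x with hF
  have hDd : ∀ x : ℝ, HasDerivAt (fun y => 1 - p + p * Real.exp y) (p * Real.exp x) x :=
    fun x => ((Real.hasDerivAt_exp x).const_mul p).const_add (1 - p)
  have hLd : ∀ x : ℝ, HasDerivAt L (q x) x := by
    intro x
    exact (hDd x).log (hD x).ne'
  have hFd : ∀ x : ℝ, HasDerivAt F (F' x) x := by
    intro x
    have h1 : HasDerivAt (fun y : ℝ => p * y + y ^ 2 / 8) (p + x / 4) x := by
      have := ((hasDerivAt_id x).const_mul p).add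
        (((hasDerivAt_pow 2 x)).div_const 8)
      refine this.congr_deriv ?_
      norm_num
      ring
    exact h1.sub (hLd x)
  have hqd : ∀ x : ℝ, HasDerivAt q (q x * (1 - q x)) x := by
    intro x
    have := ((Real.hasDerivAt_exp x).const_mul p).div (hDd x) (hD x).ne'
    refine this.congr_deriv ?_
    have hne := (hD x).ne'
    simp only [hq]
    field_simp [hq]
  have hF'd : ∀ x : ℝ, HasDerivAt F' (1 / 4 - q x * (1 - q x)) x := by
    intro x
    have h1 : HasDerivAt (fun y : ℝ => p + y / 4) (1 / 4) x := by
      simpa using ((hasDerivAt_id x).div_const 4).const_add p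
    exact h1.sub (hqd x)
  have hF'nonneg : ∀ x : ℝ, 0 ≤ 1 / 4 - q x * (1 - q x) := by
    intro x; nlinarith [sq_nonneg (2 * q x - 1)]
  have hF'mono : Monotone F' := by
    have : ∀ x, 0 ≤ deriv F' x := fun x => by
      rw [(hF'd x).deriv]; exact hF'nonneg x
    exact monotone_of_deriv_nonneg (fun x => (hF'd x).differentiableAt) this
  have hF'0 : F' 0 = 0 := by
    simp [hF', hq]
  have hderivF : ∀ x, deriv F x = F' x := fun x => (hFd x).deriv
  have hFcont : Continuous F :=
    continuous_iff_continuousAt.2 fun x => (hFd x).differentiableAt.continuousAt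
  have hFnonneg : ∀ x : ℝ, 0 ≤ F x := by
    have hF0 : F 0 = 0 := by simp [hF, hL]
    intro x
    rcases le_or_gt 0 x with hx | hx
    · have hmono : MonotoneOn F (Set.Ici 0) := by
        refine monotoneOn_of_deriv_nonneg (convex_Ici 0) hFcont.continuousOn
          (fun y _ => (hFd y).differentiableAt.differentiableWithinAt) ?_
        intro y hy
        rw [hderivF y]
        rw [interior_Ici] at hy
        have : F' 0 ≤ F' y := hF'mono (le_of_lt hy)
        linarith [hF'0 ▸ this]
      have := hmono Set.self_mem_Ici hx hx
      linarith [hF0 ▸ this]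
    · have hanti : AntitoneOn F (Set.Iic 0) := by
        refine antitoneOn_of_deriv_nonpos (convex_Iic 0) hFcont.continuousOn
          (fun y _ => (hFd y).differentiableAt.differentiableWithinAt) ?_
        intro y hy
        rw [hderivF y]
        rw [interior_Iic] at hy
        have : F' y ≤ F' 0 := hF'mono (le_of_lt hy)
        linarith [hF'0 ▸ this]
      have := hanti (le_of_lt hx) Set.self_mem_Iic (le_of_lt hx)
      linarith [hF0 ▸ this]
  -- now conclude
  have hkey : 1 - p + p * Real.exp h ≤ Real.exp (p * h + h ^ 2 / 8) := by
    have := hFnonneg h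
    have hlog : L h ≤ p * h + h ^ 2 / 8 := by simp only [hF] at this; linarith
    calc 1 - p + p * Real.exp h = Real.exp (L h) := (Real.exp_log (hD h)).symm
      _ ≤ Real.exp (p * h + h ^ 2 / 8) := Real.exp_le_exp.2 hlog
  have hlhs : (1 - p) * Real.exp (-p * h) + p * Real.exp ((1 - p) * h)
      = Real.exp (-p * h) * (1 - p + p * Real.exp h) := by
    have h1 : (1 - p) * h = -p * h + h := by ring
    rw [h1, Real.exp_add]
    ring
  rw [hlhs]
  calc Real.exp (-p * h) * (1 - p + p * Real.exp h)
      ≤ Real.exp (-p * h) * Real.exp (p * h + h ^ 2 / 8) :=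
        mul_le_mul_of_nonneg_left hkey (Real.exp_pos _).le
    _ = Real.exp (h ^ 2 / 8) := by rw [← Real.exp_add]; congr 1; ring

lemma integrable_of_bdd {Ω : Type*} [MeasurableSpace Ω] {ν : Measure Ω} [IsFiniteMeasure ν]
    {f : Ω → ℝ} (hf : AEStronglyMeasurable f ν) {C : ℝ} (h : ∀ ω, |f ω| ≤ C) :
    Integrable f ν :=
  Integrable.mono' (integrable_const C) hf (ae_of_all _ fun ω => by
    simpa [Real.norm_eq_abs] using h ω)

/-- Hoeffding's lemma, diameter form. -/
lemma hoeffding_mgf {Ω : Type*} [MeasurableSpace Ω] (ν : Measure Ω) [IsProbabilityMeasure ν]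
    {X : Ω → ℝ} (hX : Measurable X) {c : ℝ} (hc : 0 ≤ c)
    (hdiam : ∀ ω ω', X ω - X ω' ≤ c) (hmean : ∫ ω, X ω ∂ν = 0) (s : ℝ) :
    ∫ ω, Real.exp (s * X ω) ∂ν ≤ Real.exp (s ^ 2 * c ^ 2 / 8) := by
  have hne : Nonempty Ω := by
    by_contra hempty
    rw [not_nonempty_iff] at hempty
    have h1 : ν Set.univ = 1 := measure_univ
    simp [Set.univ_eq_empty_iff.2 hempty] at h1
  obtain ⟨ω₀⟩ := hne
  haveI : Nonempty Ω := ⟨ω₀⟩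
  -- bounds
  have hbddBelow : BddBelow (Set.range X) := by
    refine ⟨X ω₀ - c, ?_⟩
    rintro _ ⟨ω, rfl⟩
    linarith [hdiam ω₀ ω]
  set a : ℝ := sInf (Set.range X) with ha
  have hXa : ∀ ω, a ≤ X ω := fun ω => csInf_le hbddBelow ⟨ω, rfl⟩
  have hXb : ∀ ω, X ω ≤ a + c := by
    intro ω
    have : X ω - c ≤ a := le_csInf (Set.range_nonempty X) (by
      rintro _ ⟨ω', rfl⟩; linarith [hdiam ω ω'])
    linarith
  set b : ℝ := a + c with hb
  have hXint : Integrable X ν := integrable_of_bdd hX.aestronglyMeasurable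
    (C := max |a| |b|) (fun ω => abs_le.2 ⟨by
      have := hXa ω; have := neg_abs_le a; linarith [le_max_left |a| |b|], by
      have := hXb ω; have := le_abs_self b; linarith [le_max_right |a| |b|]⟩)
  have ha0 : a ≤ 0 := by
    have : ∫ _ : Ω, a ∂ν ≤ ∫ ω, X ω ∂ν := integral_mono (integrable_const a) hXint hXa
    simpa [hmean] using this
  have hb0 : 0 ≤ b := by
    have : ∫ ω, X ω ∂ν ≤ ∫ _ : Ω, b ∂ν := integral_mono hXint (integrable_const b) hXb
    simpa [hmean] using this
  rcases eq_or_lt_of_le hc with hc0 | hc0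
  · -- c = 0 : X constant = 0
    have hX0 : ∀ ω, X ω = 0 := fun ω => le_antisymm (by have := hXb ω; rw [hb] at this; linarith)
      (by have := hXa ω; linarith)
    simp only [hX0, mul_zero, Real.exp_zero]
    simp [Real.exp_nonneg, Real.one_le_exp_iff]
    positivity
  -- c > 0
  set p : ℝ := -a / c with hp
  have hp0 : 0 ≤ p := div_nonneg (by linarith) hc0.le
  have hp1 : p ≤ 1 := by
    rw [hp, div_le_one hc0]
    simp only [hb] at hb0
    linarith
  set h : ℝ := s * c with hh
  set K1 : ℝ := Real.exp (s * a) with hK1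
  set K2 : ℝ := Real.exp (s * b) with hK2
  -- pointwise convexity bound
  have hconv : ∀ ω, Real.exp (s * X ω) ≤ (b - X ω) / c * K1 + (X ω - a) / c * K2 := by
    intro ω
    have hw1 : (0:ℝ) ≤ (b - X ω) / c := div_nonneg (by linarith [hXb ω]) hc0.le
    have hw2 : (0:ℝ) ≤ (X ω - a) / c := div_nonneg (by linarith [hXa ω]) hc0.le
    have hsum : (b - X ω) / c + (X ω - a) / c = 1 := by
      field_simp [hb]
      linarith [hb]
    have := convexOn_exp.2 (Set.mem_univ (s * a)) (Set.mem_univ (s * b)) hw1 hw2 hsum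
    simp only [smul_eq_mul] at this
    have harg : (b - X ω) / c * (s * a) + (X ω - a) / c * (s * b) = s * X ω := by
      field_simp [hb]
      ring
    rw [harg] at this
    exact this
  -- integrate
  have hExpInt : Integrable (fun ω => Real.exp (s * X ω)) ν := by
    refine integrable_of_bdd ((Real.measurable_exp.comp (hX.const_mul s)).aestronglyMeasurable)
      (C := Real.exp (|s| * max |a| |b|)) ?_
    intro ω
    rw [abs_of_pos (Real.exp_pos _)]
    apply Real.exp_le_exp.2
    calc s * X ω ≤ |s * X ω| := le_abs_self _
      _ = |s| * |X ω| := abs_mul _ _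
      _ ≤ |s| * max |a| |b| := by
          apply mul_le_mul_of_nonneg_left _ (abs_nonneg s)
          have h1 : -(max |a| |b|) ≤ X ω := by
            have t1 := hXa ω
            have t2 := neg_abs_le a
            have t3 := le_max_left |a| |b|
            linarith
          have h2 : X ω ≤ max |a| |b| := by
            have t1 := hXb ω
            have t2 := le_abs_self b
            have t3 := le_max_right |a| |b|
            linarith
          exact abs_le.2 ⟨h1, h2⟩
  have hRHSInt : Integrable (fun ω => (b - X ω) / c * K1 + (X ω - a) / c * K2) ν := by
    apply Integrable.add
    · exact (((integrable_const b).sub hXint).div_const c).mul_const K1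
    · exact ((hXint.sub (integrable_const a)).div_const c).mul_const K2
  have hIntLe : ∫ ω, Real.exp (s * X ω) ∂ν
      ≤ ∫ ω, ((b - X ω) / c * K1 + (X ω - a) / c * K2) ∂ν :=
    integral_mono hExpInt hRHSInt hconv
  have hIntEq : ∫ ω, ((b - X ω) / c * K1 + (X ω - a) / c * K2) ∂ν
      = (1 - p) * K1 + p * K2 := by
    have e1 : ∫ ω, (b - X ω) / c * K1 ∂ν = (1 - p) * K1 := by
      have : (fun ω => (b - X ω) / c * K1) = fun ω => b / c * K1 - X ω * (K1 / c) := by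
        funext ω; field_simp
      rw [this, integral_sub (integrable_const _) (hXint.mul_const _),
        integral_const, integral_mul_const, hmean]
      have : b / c = 1 - p := by rw [hp, hb]; field_simp; ring
      simp [this]
    have e2 : ∫ ω, (X ω - a) / c * K2 ∂ν = p * K2 := by
      have : (fun ω => (X ω - a) / c * K2) = fun ω => X ω * (K2 / c) - a / c * K2 := by
        funext ω; field_simp
      rw [this, integral_sub (hXint.mul_const _) (integrable_const _),
        integral_const, integral_mul_const, hmean]
      have : -(a / c * K2) = p * K2 := by rw [hp]; ring
      simp only [probReal_univ, measure_univ, ENNReal.toReal_one, one_smul, zero_mul]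
      linarith
    have I1 : Integrable (fun ω => (b - X ω) / c * K1) ν :=
      (((integrable_const b).sub hXint).div_const c).mul_const K1
    have I2 : Integrable (fun ω => (X ω - a) / c * K2) ν :=
      ((hXint.sub (integrable_const a)).div_const c).mul_const K2
    have hadd : ∫ ω, ((b - X ω) / c * K1 + (X ω - a) / c * K2) ∂ν
        = (∫ ω, (b - X ω) / c * K1 ∂ν) + ∫ ω, (X ω - a) / c * K2 ∂ν :=
      integral_add I1 I2
    rw [hadd, e1, e2]
  have hfinal : (1 - p) * K1 + p * K2 ≤ Real.exp (s ^ 2 * c ^ 2 / 8) := by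
    have hsa : s * a = -p * h := by rw [hp, hh]; field_simp
    have hsb : s * b = (1 - p) * h := by rw [hp, hb, hh]; field_simp; ring
    have := key_ineq hp0 hp1 h
    rw [hK1, hK2, hsa, hsb]
    calc (1 - p) * Real.exp (-p * h) + p * Real.exp ((1 - p) * h)
        ≤ Real.exp (h ^ 2 / 8) := this
      _ = Real.exp (s ^ 2 * c ^ 2 / 8) := by rw [hh]; congr 1; ring
  linarith

/-- helper: integrability of bounded measurable fn on probability measure -/
lemma integrable_exp_of_bdd {Ω : Type*} [MeasurableSpace Ω] {ν : Measure Ω} [IsFiniteMeasure ν]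
    {f : Ω → ℝ} (hf : Measurable f) {C : ℝ} (h : ∀ ω, |f ω| ≤ C) (s : ℝ) :
    Integrable (fun ω => Real.exp (s * f ω)) ν := by
  refine integrable_of_bdd ((Real.measurable_exp.comp (hf.const_mul s)).aestronglyMeasurable)
    (C := Real.exp (|s| * C)) ?_
  intro ω
  rw [abs_of_pos (Real.exp_pos _)]
  apply Real.exp_le_exp.2
  calc s * f ω ≤ |s * f ω| := le_abs_self _
    _ = |s| * |f ω| := abs_mul _ _
    _ ≤ |s| * C := mul_le_mul_of_nonneg_left (h ω) (abs_nonneg s)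

/-- McDiarmid mgf bound -/
lemma mcdiarmid_mgf {α : Type*} [MeasurableSpace α] (μ : Measure α) [IsProbabilityMeasure μ]
    {c M : ℝ} (hc : 0 ≤ c) :
    ∀ (N : ℕ) (f : (Fin N → α) → ℝ), Measurable f → (∀ X, |f X| ≤ M) →
    (∀ (i : Fin N) (X Y : Fin N → α), (∀ j, j ≠ i → X j = Y j) → f X - f Y ≤ c) →
    ∀ s : ℝ,
      ∫ X, Real.exp (s * (f X - ∫ Z, f Z ∂(Measure.pi fun _ : Fin N => μ)))
          ∂(Measure.pi fun _ : Fin N => μ)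
        ≤ Real.exp (s ^ 2 * N * c ^ 2 / 8) := by
  intro N
  induction N with
  | zero =>
    intro f hf hbd hdiff s
    have hconst : ∀ X : Fin 0 → α, f X = f default := fun X => congrArg f (Subsingleton.elim _ _)
    have h1 : ∫ Z, f Z ∂(Measure.pi fun _ : Fin 0 => μ) = f default := by
      rw [show (fun Z : Fin 0 → α => f Z) = fun _ => f default from funext hconst]
      simp
    simp only [h1]
    calc ∫ X, Real.exp (s * (f X - f default)) ∂(Measure.pi fun _ : Fin 0 => μ)
        = ∫ _X, (1:ℝ) ∂(Measure.pi fun _ : Fin 0 => μ) := by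
          congr 1; funext X; rw [hconst X]; simp
      _ = 1 := by simp
      _ ≤ Real.exp (s ^ 2 * (0:ℕ) * c ^ 2 / 8) := by simp
  | succ N ih =>
    intro f hf hbd hdiff s
    set πN : Measure (Fin N → α) := Measure.pi (fun _ : Fin N => μ) with hπN
    set πN1 : Measure (Fin (N+1) → α) := Measure.pi (fun _ : Fin (N+1) => μ) with hπN1
    set e := MeasurableEquiv.piFinSuccAbove (fun _ : Fin (N+1) => α) 0 with he
    have hcons : ∀ p : α × (Fin N → α), e.symm p = Fin.cons p.1 p.2 := by
      intro p
      rw [he]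
      show (Fin.insertNthEquiv (fun _ => α) 0) p = _
      simp [Fin.insertNthEquiv, Fin.insertNth_zero']
    have hMPe : MeasurePreserving (⇑e.symm) (μ.prod πN) πN1 :=
      (measurePreserving_piFinSuccAbove (fun _ : Fin (N+1) => μ) 0).symm e
    have hInt : ∀ F : (Fin (N+1) → α) → ℝ,
        ∫ X, F X ∂πN1 = ∫ p, F (Fin.cons p.1 p.2) ∂(μ.prod πN) := by
      intro F
      rw [← hMPe.integral_comp e.symm.measurableEmbedding F]
      refine integral_congr_ae (ae_of_all _ fun p => ?_)
      exact congrArg F (hcons p)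
    have hconsMeas : Measurable (fun p : α × (Fin N → α) => (Fin.cons p.1 p.2 : Fin (N+1) → α)) := by
      have : (fun p : α × (Fin N → α) => (Fin.cons p.1 p.2 : Fin (N+1) → α)) = ⇑e.symm :=
        (funext hcons).symm
      rw [this]
      exact e.symm.measurable
    have hfC : Measurable (fun p : α × (Fin N → α) => f (Fin.cons p.1 p.2)) :=
      hf.comp hconsMeas
    set m : ℝ := ∫ Z, f Z ∂πN1 with hm
    set g : α → ℝ := fun x => ∫ Y, f (Fin.cons x Y) ∂πN with hg
    have hgSM : StronglyMeasurable g := hfC.stronglyMeasurable.integral_prod_right'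
    have hgmeas : Measurable g := hgSM.measurable
    have hgM : ∀ x, |g x| ≤ M := by
      intro x
      rw [← Real.norm_eq_abs]
      calc ‖∫ Y, f (Fin.cons x Y) ∂πN‖
          ≤ M * (πN Set.univ).toReal :=
            norm_integral_le_of_norm_le_const (ae_of_all _ fun Y => by
              rw [Real.norm_eq_abs]; exact hbd _)
        _ = M := by simp
    have hfCint : Integrable (fun p : α × (Fin N → α) => f (Fin.cons p.1 p.2)) (μ.prod πN) :=
      integrable_of_bdd hfC.aestronglyMeasurable (fun p => hbd _)
    have hgmean : ∫ x, g x ∂μ = m := by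
      rw [hm, hInt f, integral_prod _ hfCint]
    have hconsx : ∀ x : α, Measurable (fun Y : Fin N → α => (Fin.cons x Y : Fin (N+1) → α)) := by
      intro x
      apply measurable_pi_iff.2
      intro j
      refine Fin.cases ?_ ?_ j
      · simpa using measurable_const
      · intro i
        simpa using measurable_pi_apply i
    -- IH applied to each section
    have hIH : ∀ x : α, ∫ Y, Real.exp (s * (f (Fin.cons x Y) - g x)) ∂πN
        ≤ Real.exp (s ^ 2 * N * c ^ 2 / 8) := by
      intro x
      have hfx : Measurable (fun Y : Fin N → α => f (Fin.cons x Y)) := hf.comp (hconsx x)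
      have hfxbd : ∀ Y, |f (Fin.cons x Y)| ≤ M := fun Y => hbd _
      have hfxdiff : ∀ (i : Fin N) (Y Y' : Fin N → α), (∀ j, j ≠ i → Y j = Y' j) →
          f (Fin.cons x Y) - f (Fin.cons x Y') ≤ c := by
        intro i Y Y' hYY'
        refine hdiff i.succ _ _ ?_
        intro k hk
        revert hk
        refine Fin.cases ?_ ?_ k
        · intro _
          simp
        · intro l hl'
          simp only [Fin.cons_succ]
          exact hYY' l (fun hli => hl' (by rw [hli]))
      exact ih (fun Y => f (Fin.cons x Y)) hfx hfxbd hfxdiff s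
    have hgdiam : ∀ x x' : α, g x - g x' ≤ c := by
      intro x x'
      have hint1 : Integrable (fun Y => f (Fin.cons x Y)) πN :=
        integrable_of_bdd (hf.comp (hconsx x)).aestronglyMeasurable (fun Y => hbd _)
      have hint2 : Integrable (fun Y => f (Fin.cons x' Y)) πN :=
        integrable_of_bdd (hf.comp (hconsx x')).aestronglyMeasurable (fun Y => hbd _)
      have hpt : ∀ Y, f (Fin.cons x Y) - f (Fin.cons x' Y) ≤ c := by
        intro Y
        refine hdiff 0 _ _ ?_
        intro k hk
        revert hk
        refine Fin.cases ?_ ?_ k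
        · intro h0
          exact absurd rfl h0
        · intro l _
          simp
      calc g x - g x' = ∫ Y, (f (Fin.cons x Y) - f (Fin.cons x' Y)) ∂πN :=
            (integral_sub hint1 hint2).symm
        _ ≤ ∫ _Y, c ∂πN := integral_mono (hint1.sub hint2) (integrable_const c) hpt
        _ = c := by simp
    have hbm : ∀ X : Fin (N+1) → α, |f X - m| ≤ M + |m| := by
      intro X
      have h1 := abs_le.1 (hbd X)
      have h2 := le_abs_self m
      have h3 := neg_abs_le m
      exact abs_le.2 ⟨by linarith, by linarith⟩
    set K : ℝ := Real.exp (s ^ 2 * N * c ^ 2 / 8) with hK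
    have hprodInt : Integrable
        (fun p : α × (Fin N → α) => Real.exp (s * (f (Fin.cons p.1 p.2) - m))) (μ.prod πN) :=
      integrable_exp_of_bdd (hfC.sub measurable_const) (fun p => hbm _) s
    have hInner : ∀ x : α, ∫ Y, Real.exp (s * (f (Fin.cons x Y) - m)) ∂πN
        ≤ Real.exp (s * (g x - m)) * K := by
      intro x
      have heq : ∀ Y, Real.exp (s * (f (Fin.cons x Y) - m))
          = Real.exp (s * (g x - m)) * Real.exp (s * (f (Fin.cons x Y) - g x)) := by
        intro Y
        rw [← Real.exp_add]
        congr 1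
        ring
      calc ∫ Y, Real.exp (s * (f (Fin.cons x Y) - m)) ∂πN
          = ∫ Y, Real.exp (s * (g x - m)) * Real.exp (s * (f (Fin.cons x Y) - g x)) ∂πN :=
            integral_congr_ae (ae_of_all _ fun Y => heq Y)
        _ = Real.exp (s * (g x - m)) * ∫ Y, Real.exp (s * (f (Fin.cons x Y) - g x)) ∂πN :=
            integral_const_mul _ _
        _ ≤ Real.exp (s * (g x - m)) * K :=
            mul_le_mul_of_nonneg_left (hIH x) (Real.exp_pos _).le
    have hI1 : Integrable (fun x => ∫ Y, Real.exp (s * (f (Fin.cons x Y) - m)) ∂πN) μ := by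
      refine integrable_of_bdd ?_ (C := Real.exp (|s| * (M + |m|))) ?_
      · exact (StronglyMeasurable.integral_prod_right'
          (f := fun p : α × (Fin N → α) => Real.exp (s * (f (Fin.cons p.1 p.2) - m)))
          ((Real.measurable_exp.comp
            ((hfC.sub measurable_const).const_mul s)).stronglyMeasurable)).aestronglyMeasurable
      · intro x
        rw [← Real.norm_eq_abs]
        calc ‖∫ Y, Real.exp (s * (f (Fin.cons x Y) - m)) ∂πN‖
            ≤ Real.exp (|s| * (M + |m|)) * (πN Set.univ).toReal :=
              norm_integral_le_of_norm_le_const (ae_of_all _ fun Y => by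
                rw [Real.norm_eq_abs, abs_of_pos (Real.exp_pos _)]
                apply Real.exp_le_exp.2
                calc s * (f (Fin.cons x Y) - m)
                    ≤ |s * (f (Fin.cons x Y) - m)| := le_abs_self _
                  _ = |s| * |f (Fin.cons x Y) - m| := abs_mul _ _
                  _ ≤ |s| * (M + |m|) := mul_le_mul_of_nonneg_left (hbm _) (abs_nonneg s))
          _ = Real.exp (|s| * (M + |m|)) := by simp
    have hI2 : Integrable (fun x => Real.exp (s * (g x - m)) * K) μ :=
      (integrable_exp_of_bdd (hgmeas.sub measurable_const) (C := M + |m|)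
        (fun x => by
          show |g x - m| ≤ M + |m|
          have h1 := abs_le.1 (hgM x)
          have h2 := le_abs_self m
          have h3 := neg_abs_le m
          exact abs_le.2 ⟨by linarith, by linarith⟩) s).mul_const K
    have hHoef : ∫ x, Real.exp (s * (g x - m)) ∂μ ≤ Real.exp (s ^ 2 * c ^ 2 / 8) := by
      refine hoeffding_mgf μ (hgmeas.sub measurable_const) hc (fun x x' => ?_) ?_ s
      · show g x - m - (g x' - m) ≤ c
        have := hgdiam x x'
        linarith
      · have hgint : Integrable g μ := integrable_of_bdd hgmeas.aestronglyMeasurable hgM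
        show ∫ x, (g x - m) ∂μ = 0
        rw [integral_sub hgint (integrable_const m), hgmean, integral_const]
        simp
    calc ∫ X, Real.exp (s * (f X - m)) ∂πN1
        = ∫ p, Real.exp (s * (f (Fin.cons p.1 p.2) - m)) ∂(μ.prod πN) :=
          hInt (fun X => Real.exp (s * (f X - m)))
      _ = ∫ x, ∫ Y, Real.exp (s * (f (Fin.cons x Y) - m)) ∂πN ∂μ :=
          integral_prod _ hprodInt
      _ ≤ ∫ x, Real.exp (s * (g x - m)) * K ∂μ :=
          integral_mono hI1 hI2 hInner
      _ = (∫ x, Real.exp (s * (g x - m)) ∂μ) * K := integral_mul_const _ _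
      _ ≤ Real.exp (s ^ 2 * c ^ 2 / 8) * K :=
          mul_le_mul_of_nonneg_right hHoef (Real.exp_pos _).le
      _ = Real.exp (s ^ 2 * ↑(N + 1) * c ^ 2 / 8) := by
          rw [hK, ← Real.exp_add]
          congr 1
          push_cast
          ring

/-- McDiarmid tail bound. -/
lemma mcdiarmid_tail {α : Type*} [MeasurableSpace α] (μ : Measure α) [IsProbabilityMeasure μ]
    {c M : ℝ} (hc : 0 < c) (N : ℕ) (f : (Fin N → α) → ℝ) (hf : Measurable f)
    (hbd : ∀ X, |f X| ≤ M)
    (hdiff : ∀ (i : Fin N) (X Y : Fin N → α), (∀ j, j ≠ i → X j = Y j) → f X - f Y ≤ c)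
    (hN : 0 < N) (t : ℝ) (ht : 0 < t) :
    (Measure.pi fun _ : Fin N => μ)
      {X | f X > (∫ Z, f Z ∂(Measure.pi fun _ : Fin N => μ)) + t}
      ≤ ENNReal.ofReal (Real.exp (-2 * t ^ 2 / (N * c ^ 2))) := by
  set πN : Measure (Fin N → α) := Measure.pi fun _ : Fin N => μ with hπN
  set m : ℝ := ∫ Z, f Z ∂πN with hm
  set s : ℝ := 4 * t / (N * c ^ 2) with hs
  have hNpos : (0:ℝ) < N := by exact_mod_cast hN
  have hs0 : 0 ≤ s := by positivity
  have hintexp : Integrable (fun X => Real.exp (s * f X)) πN :=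
    integrable_exp_of_bdd hf hbd s
  have hmgf := ProbabilityTheory.measure_ge_le_exp_mul_mgf (X := f) (μ := πN) (t := s)
    (m + t) hs0 hintexp
  have hmgfle : ProbabilityTheory.mgf f πN s ≤ Real.exp (s * m) * Real.exp (s ^ 2 * N * c ^ 2 / 8) := by
    have h1 : ProbabilityTheory.mgf f πN s = ∫ X, Real.exp (s * f X) ∂πN := rfl
    have h2 : ∀ X : Fin N → α, Real.exp (s * f X)
        = Real.exp (s * m) * Real.exp (s * (f X - m)) := by
      intro X
      rw [← Real.exp_add]
      congr 1
      ring
    rw [h1]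
    calc ∫ X, Real.exp (s * f X) ∂πN
        = ∫ X, Real.exp (s * m) * Real.exp (s * (f X - m)) ∂πN :=
          integral_congr_ae (ae_of_all _ h2)
      _ = Real.exp (s * m) * ∫ X, Real.exp (s * (f X - m)) ∂πN := integral_const_mul _ _
      _ ≤ Real.exp (s * m) * Real.exp (s ^ 2 * N * c ^ 2 / 8) :=
          mul_le_mul_of_nonneg_left (mcdiarmid_mgf μ hc.le N f hf hbd hdiff s)
            (Real.exp_pos _).le
  have hreal : (πN {X | m + t ≤ f X}).toReal ≤ Real.exp (-2 * t ^ 2 / (N * c ^ 2)) := by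
    calc (πN {X | m + t ≤ f X}).toReal
        ≤ Real.exp (-s * (m + t)) * ProbabilityTheory.mgf f πN s := hmgf
      _ ≤ Real.exp (-s * (m + t)) * (Real.exp (s * m) * Real.exp (s ^ 2 * N * c ^ 2 / 8)) :=
          mul_le_mul_of_nonneg_left hmgfle (Real.exp_pos _).le
      _ = Real.exp (-s * (m + t) + (s * m + s ^ 2 * N * c ^ 2 / 8)) := by
          rw [Real.exp_add, Real.exp_add]
      _ = Real.exp (-2 * t ^ 2 / (N * c ^ 2)) := by
          congr 1
          rw [hs]
          field_simp
          ring
  calc πN {X | f X > m + t}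
      ≤ πN {X | m + t ≤ f X} := measure_mono (fun X hX => by
        have h' : m + t < f X := hX
        exact le_of_lt h')
    _ = ENNReal.ofReal ((πN {X | m + t ≤ f X}).toReal) := (ENNReal.ofReal_toReal (measure_ne_top _ _)).symm
    _ ≤ ENNReal.ofReal (Real.exp (-2 * t ^ 2 / (N * c ^ 2))) := ENNReal.ofReal_le_ofReal hreal

/-- Hoeffding-type concentration for the uniform deviation: for a finite
nonempty family `G` of measurable `[0,1]`-valued losses, the probability
(over an i.i.d. sample of size `N` from `μ`) that the uniform deviation
exceeds its mean by more than `t` is at most `exp (-2 N t²)`. -/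
theorem uniform_deviation_concentration
    {α : Type*} [MeasurableSpace α] (μ : Measure α) [IsProbabilityMeasure μ]
    (G : Finset (α → ℝ)) (hG : G.Nonempty)
    (hmeas : ∀ g ∈ G, Measurable g)
    (hrange : ∀ g ∈ G, ∀ x, g x ∈ Set.Icc (0 : ℝ) 1)
    (N : ℕ) (hN : 0 < N) (t : ℝ) (ht : 0 < t) :
    (Measure.pi fun _ : Fin N => μ)
      {X : Fin N → α |
        (G.sup' hG fun g => |(∫ a, g a ∂μ) - (1 / N) * ∑ i, g (X i)|) >
          (∫ Y, (G.sup' hG fun g => |(∫ a, g a ∂μ) - (1 / N) * ∑ i, g (Y i)|)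
              ∂(Measure.pi fun _ : Fin N => μ)) + t }
      ≤ ENNReal.ofReal (Real.exp (-2 * N * t ^ 2)) := by
  classical
  have hNpos : (0:ℝ) < N := by exact_mod_cast hN
  set f : (Fin N → α) → ℝ :=
    fun X => G.sup' hG fun g => |(∫ a, g a ∂μ) - (1 / N) * ∑ i, g (X i)| with hfdef
  -- bounds on the individual terms
  have hterm01 : ∀ g ∈ G, ∀ X : Fin N → α,
      |(∫ a, g a ∂μ) - (1 / N) * ∑ i, g (X i)| ≤ 1 := by
    intro g hg X
    have hgint : Integrable g μ := integrable_of_bdd (hmeas g hg).aestronglyMeasurable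
      (C := 1) (fun x => abs_le.2 ⟨by linarith [(hrange g hg x).1], (hrange g hg x).2⟩)
    have hI0 : 0 ≤ ∫ a, g a ∂μ := integral_nonneg (fun a => (hrange g hg a).1)
    have hI1 : (∫ a, g a ∂μ) ≤ 1 := by
      calc (∫ a, g a ∂μ) ≤ ∫ _a, (1:ℝ) ∂μ :=
            integral_mono hgint (integrable_const 1) (fun a => (hrange g hg a).2)
        _ = 1 := by simp
    have hS0 : 0 ≤ ∑ i, g (X i) := Finset.sum_nonneg (fun i _ => (hrange g hg (X i)).1)
    have hSN : ∑ i, g (X i) ≤ N := by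
      calc ∑ i, g (X i) ≤ ∑ _i : Fin N, (1:ℝ) :=
            Finset.sum_le_sum (fun i _ => (hrange g hg (X i)).2)
        _ = N := by simp
    have hA0 : 0 ≤ (1 / (N:ℝ)) * ∑ i, g (X i) := by positivity
    have hA1 : (1 / (N:ℝ)) * ∑ i, g (X i) ≤ 1 := by
      rw [div_mul_eq_mul_div, one_mul, div_le_one hNpos]
      exact hSN
    exact abs_le.2 ⟨by linarith, by linarith⟩
  have hfbd : ∀ X, |f X| ≤ 1 := by
    intro X
    simp only [hfdef]
    obtain ⟨g₀, hg₀⟩ := hG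
    refine abs_le.2 ⟨?_, ?_⟩
    · calc (-1:ℝ) ≤ |(∫ a, g₀ a ∂μ) - (1 / N) * ∑ i, g₀ (X i)| :=
            le_trans (by norm_num) (abs_nonneg _)
        _ ≤ _ := Finset.le_sup' (fun g => |(∫ a, g a ∂μ) - (1 / (N:ℝ)) * ∑ i, g (X i)|) hg₀
    · exact Finset.sup'_le _ _ (fun g hg => hterm01 g hg X)
  have hfmeas : Measurable f := by
    have h1 : ∀ g ∈ G, Measurable
        (fun X : Fin N → α => |(∫ a, g a ∂μ) - (1 / N) * ∑ i, g (X i)|) := by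
      intro g hg
      have hsum : Measurable (fun X : Fin N → α => ∑ i, g (X i)) :=
        Finset.measurable_sum Finset.univ
          (fun i _ => (hmeas g hg).comp (measurable_pi_apply i))
      exact (measurable_const.sub (hsum.const_mul (1 / N))).abs
    have := Finset.measurable_sup' hG h1
    have heq : (G.sup' hG fun g (X : Fin N → α) =>
        |(∫ a, g a ∂μ) - (1 / N) * ∑ i, g (X i)|) = f := by
      funext X
      rw [hfdef]
      exact Finset.sup'_apply hG _ X
    rwa [heq] at this
  have hfdiff : ∀ (i : Fin N) (X Y : Fin N → α), (∀ j, j ≠ i → X j = Y j) →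
      f X - f Y ≤ 1 / N := by
    intro i X Y hXY
    simp only [hfdef]
    rw [sub_le_iff_le_add, add_comm]
    refine Finset.sup'_le _ _ (fun g hg => ?_)
    have hsumdiff : (∑ j, g (X j)) - ∑ j, g (Y j) = g (X i) - g (Y i) := by
      rw [← Finset.sum_sub_distrib]
      refine Finset.sum_eq_single i (fun j _ hj => by rw [hXY j hj]; ring)
        (fun h => absurd (Finset.mem_univ i) h)
    have hgd : |g (X i) - g (Y i)| ≤ 1 := by
      have h1 := hrange g hg (X i)
      have h2 := hrange g hg (Y i)
      exact abs_le.2 ⟨by linarith [h1.1, h2.2], by linarith [h1.2, h2.1]⟩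
    have hud : |(1 / (N:ℝ)) * ∑ j, g (Y j) - (1 / N) * ∑ j, g (X j)| ≤ 1 / N := by
      rw [← mul_sub, abs_mul, abs_of_pos (by positivity : (0:ℝ) < 1 / (N:ℝ))]
      calc (1 / (N:ℝ)) * |(∑ j, g (Y j)) - ∑ j, g (X j)| = (1 / N) * |g (X i) - g (Y i)| := by
            rw [show (∑ j, g (Y j)) - ∑ j, g (X j) = -(g (X i) - g (Y i)) by
              rw [← hsumdiff]; ring, abs_neg]
        _ ≤ (1 / N) * 1 := by
            exact mul_le_mul_of_nonneg_left hgd (by positivity)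
        _ = 1 / N := mul_one _
    calc |(∫ a, g a ∂μ) - (1 / N) * ∑ j, g (X j)|
        ≤ |(∫ a, g a ∂μ) - (1 / N) * ∑ j, g (Y j)|
            + |(1 / N) * ∑ j, g (Y j) - (1 / N) * ∑ j, g (X j)| := abs_sub_le _ _ _
      _ ≤ (G.sup' hG fun g => |(∫ a, g a ∂μ) - (1 / N) * ∑ i, g (Y i)|) + 1 / N := add_le_add (Finset.le_sup' (fun g => |(∫ a, g a ∂μ) - (1 / (N:ℝ)) * ∑ i, g (Y i)|) hg) hud
  have hc : (0:ℝ) < 1 / N := by positivity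
  have := mcdiarmid_tail μ (M := 1) hc N f hfmeas hfbd hfdiff hN t ht
  have hexp : -2 * t ^ 2 / ((N:ℝ) * (1 / N) ^ 2) = -2 * N * t ^ 2 := by
    field_simp
  rwa [hexp] at this
end

section
/- (Talagrand's contraction lemma.) Let x_1, …, x_N be points of ℝ^n, let H be a nonempty family of functions h : ℝ^n → ℝ, and let Φ_1, …, Φ_N : ℝ → ℝ be L-Lipschitz functions. Assume the suprema below are finite. Then (1/N)·E_σ[sup_{h∈H} Σ_{i=1}^N σ_i Φ_i(h(x_i))] ≤ L·E_σ[sup_{h∈H} (1/N) Σ_{i=1}^N σ_i h(x_i)] = L·R̂_S(H). -/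
open Finset
-- two-sup swap lemma test
lemma sup_pair {α : Type*} (H : Set α) (hH : H.Nonempty) (a u : α → ℝ) (L : ℝ)
    (φ : ℝ → ℝ) (hφ : ∀ s t : ℝ, |φ s - φ t| ≤ L * |s - t|)
    (bB : BddAbove {r : ℝ | ∃ h ∈ H, r = a h + L * u h})
    (bB' : BddAbove {r : ℝ | ∃ h ∈ H, r = a h - L * u h}) :
    sSup {r : ℝ | ∃ h ∈ H, r = a h + φ (u h)} + sSup {r : ℝ | ∃ h ∈ H, r = a h - φ (u h)}
      ≤ sSup {r : ℝ | ∃ h ∈ H, r = a h + L * u h} + sSup {r : ℝ | ∃ h ∈ H, r = a h - L * u h} := by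
  obtain ⟨h₀, hh₀⟩ := hH
  set c := sSup {r : ℝ | ∃ h ∈ H, r = a h + L * u h} + sSup {r : ℝ | ∃ h ∈ H, r = a h - L * u h} with hc
  have key : ∀ p ∈ {r : ℝ | ∃ h ∈ H, r = a h + φ (u h)},
      ∀ q ∈ {r : ℝ | ∃ h ∈ H, r = a h - φ (u h)}, p + q ≤ c := by
    rintro p ⟨h, hh, rfl⟩ q ⟨h', hh', rfl⟩
    have hlip := hφ (u h) (u h')
    have h1 := le_abs_self (φ (u h) - φ (u h'))
    rcases le_total (u h') (u h) with hle | hle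
    · have habs : |u h - u h'| = u h - u h' := abs_of_nonneg (by linarith)
      have m1 : a h + L * u h ≤ sSup {r : ℝ | ∃ h ∈ H, r = a h + L * u h} :=
        le_csSup bB ⟨h, hh, rfl⟩
      have m2 : a h' - L * u h' ≤ sSup {r : ℝ | ∃ h ∈ H, r = a h - L * u h} :=
        le_csSup bB' ⟨h', hh', rfl⟩
      rw [habs] at hlip
      nlinarith
    · have habs : |u h - u h'| = u h' - u h := by
        rw [abs_sub_comm]; exact abs_of_nonneg (by linarith)
      have m1 : a h' + L * u h' ≤ sSup {r : ℝ | ∃ h ∈ H, r = a h + L * u h} :=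
        le_csSup bB ⟨h', hh', rfl⟩
      have m2 : a h - L * u h ≤ sSup {r : ℝ | ∃ h ∈ H, r = a h - L * u h} :=
        le_csSup bB' ⟨h, hh, rfl⟩
      rw [habs] at hlip
      nlinarith
  have hAne : {r : ℝ | ∃ h ∈ H, r = a h + φ (u h)}.Nonempty := ⟨_, h₀, hh₀, rfl⟩
  have hA'ne : {r : ℝ | ∃ h ∈ H, r = a h - φ (u h)}.Nonempty := ⟨_, h₀, hh₀, rfl⟩
  have h1 : sSup {r : ℝ | ∃ h ∈ H, r = a h + φ (u h)} ≤ c - sSup {r : ℝ | ∃ h ∈ H, r = a h - φ (u h)} := by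
    apply csSup_le hAne
    intro p hp
    have h2 : sSup {r : ℝ | ∃ h ∈ H, r = a h - φ (u h)} ≤ c - p :=
      csSup_le hA'ne fun q hq => by linarith [key p hp q hq]
    linarith
  linarith

lemma sSup_scale (c : ℝ) (hc : 0 ≤ c) (S : Set ℝ) (hne : S.Nonempty) (hbdd : BddAbove S) :
    sSup {r : ℝ | ∃ s ∈ S, r = c * s} = c * sSup S := by
  rcases eq_or_lt_of_le hc with rfl | hc'
  · have : {r : ℝ | ∃ s ∈ S, r = 0 * s} = {0} := by
      ext r; simp only [Set.mem_setOf_eq, Set.mem_singleton_iff, zero_mul]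
      constructor
      · rintro ⟨s, _, rfl⟩; rfl
      · rintro rfl; exact ⟨hne.choose, hne.choose_spec, rfl⟩
    rw [this, csSup_singleton, zero_mul]
  · have hne' : {r : ℝ | ∃ s ∈ S, r = c * s}.Nonempty := ⟨_, hne.choose, hne.choose_spec, rfl⟩
    have hbdd' : BddAbove {r : ℝ | ∃ s ∈ S, r = c * s} := by
      obtain ⟨M, hM⟩ := hbdd
      exact ⟨c * M, by rintro r ⟨s, hs, rfl⟩; exact mul_le_mul_of_nonneg_left (hM hs) hc⟩
    apply le_antisymm
    · apply csSup_le hne'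
      rintro r ⟨s, hs, rfl⟩
      exact mul_le_mul_of_nonneg_left (le_csSup hbdd hs) hc
    · rw [mul_comm, ← le_div_iff₀ hc']
      apply csSup_le hne
      intro s hs
      rw [le_div_iff₀ hc', mul_comm]
      exact le_csSup hbdd' ⟨s, hs, rfl⟩

lemma setOf_eq_of_forall {α : Type*} (H : Set α) (f g : α → ℝ) (hfg : ∀ a ∈ H, f a = g a) :
    {r : ℝ | ∃ h ∈ H, r = f h} = {r : ℝ | ∃ h ∈ H, r = g h} := by
  ext r
  exact ⟨fun ⟨a, ha, e⟩ => ⟨a, ha, e.trans (hfg a ha)⟩,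
    fun ⟨a, ha, e⟩ => ⟨a, ha, e.trans (hfg a ha).symm⟩⟩

noncomputable def mixSet {n N : ℕ} (x : Fin N → (Fin n → ℝ)) (H : Set ((Fin n → ℝ) → ℝ))
    (L : ℝ) (Φ : Fin N → ℝ → ℝ) (S : Finset (Fin N)) (σ : Fin N → Bool) : Set ℝ :=
  {r : ℝ | ∃ h ∈ H, r = ∑ i, (if σ i then (1 : ℝ) else -1) *
    (if i ∈ S then L * h (x i) else Φ i (h (x i)))}

-- boundedness of the mixed sets
lemma mixSet_bdd {n N : ℕ} (x : Fin N → (Fin n → ℝ)) (H : Set ((Fin n → ℝ) → ℝ))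
    (L : ℝ) (hL : 0 ≤ L) (Φ : Fin N → ℝ → ℝ)
    (hΦ : ∀ i, ∀ a b : ℝ, |Φ i a - Φ i b| ≤ L * |a - b|)
    (hN : 0 < N)
    (hB : ∀ σ : Fin N → Bool, BddAbove
      {r : ℝ | ∃ h ∈ H, r = (1 / N) * ∑ i, (if σ i then (1 : ℝ) else -1) * h (x i)})
    (S : Finset (Fin N)) (σ : Fin N → Bool) :
    BddAbove (mixSet x H L Φ S σ) := by
  classical
  -- choose an upper bound for each B set
  choose M hM using hB
  set C0 : ℝ := ∑ σ' : Fin N → Bool, |M σ'| with hC0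
  have habs : ∀ h : (Fin n → ℝ) → ℝ, h ∈ H → ∑ i, |h (x i)| ≤ N * C0 := by
    intro h hh
    set τ : Fin N → Bool := fun i => decide (0 ≤ h (x i)) with hτ
    have hsum : ∑ i, (if τ i then (1 : ℝ) else -1) * h (x i) = ∑ i, |h (x i)| := by
      apply Finset.sum_congr rfl
      intro i _
      by_cases hpos : 0 ≤ h (x i)
      · simp [hτ, hpos, abs_of_nonneg hpos]
      · simp [hτ, hpos, abs_of_neg (lt_of_not_ge hpos)]
    have hmem : (1 / (N : ℝ)) * ∑ i, (if τ i then (1 : ℝ) else -1) * h (x i) ≤ M τ :=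
      hM τ ⟨h, hh, rfl⟩
    have hMle : M τ ≤ C0 := by
      calc M τ ≤ |M τ| := le_abs_self _
        _ ≤ C0 := Finset.single_le_sum (f := fun σ' => |M σ'|) (fun _ _ => abs_nonneg _) (mem_univ τ)
    rw [hsum] at hmem
    have hNpos : (0 : ℝ) < N := by exact_mod_cast hN
    calc ∑ i, |h (x i)| = N * ((1 / N : ℝ) * ∑ i, |h (x i)|) := by
          field_simp
      _ ≤ N * C0 := by
          apply mul_le_mul_of_nonneg_left _ (le_of_lt hNpos)
          linarith
  refine ⟨(∑ i, |Φ i 0|) + L * (N * C0), ?_⟩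
  rintro r ⟨h, hh, rfl⟩
  calc ∑ i, (if σ i then (1 : ℝ) else -1) * (if i ∈ S then L * h (x i) else Φ i (h (x i)))
      ≤ ∑ i, (|Φ i 0| + L * |h (x i)|) := by
        apply Finset.sum_le_sum
        intro i _
        have h1 : (if σ i then (1 : ℝ) else -1) * (if i ∈ S then L * h (x i) else Φ i (h (x i)))
            ≤ |if i ∈ S then L * h (x i) else Φ i (h (x i))| := by
          cases hσ : σ i
          · simp only [hσ, Bool.false_eq_true, if_false, neg_one_mul]; exact neg_le_abs _
          · simp only [hσ, if_true, one_mul]; exact le_abs_self _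
        apply h1.trans
        by_cases hiS : i ∈ S
        · simp only [hiS, if_true, abs_mul, abs_of_nonneg hL]
          have := abs_nonneg (Φ i 0)
          nlinarith [abs_nonneg (h (x i))]
        · simp only [hiS, if_false]
          have h2 := hΦ i (h (x i)) 0
          have h3 : |Φ i (h (x i))| ≤ |Φ i 0| + |Φ i (h (x i)) - Φ i 0| := by
            have := abs_sub_abs_le_abs_sub (Φ i (h (x i))) (Φ i 0)
            linarith [le_abs_self (Φ i (h (x i)))]
          simp only [sub_zero] at h2
          linarith
    _ = (∑ i, |Φ i 0|) + L * ∑ i, |h (x i)| := by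
        rw [Finset.sum_add_distrib, Finset.mul_sum]
    _ ≤ (∑ i, |Φ i 0|) + L * (N * C0) := by
        have := habs h hh
        nlinarith

lemma mixSet_step {n N : ℕ} (x : Fin N → (Fin n → ℝ)) (H : Set ((Fin n → ℝ) → ℝ))
    (hH : H.Nonempty) (L : ℝ) (Φ : Fin N → ℝ → ℝ)
    (hΦ : ∀ i, ∀ a b : ℝ, |Φ i a - Φ i b| ≤ L * |a - b|)
    (hbdd : ∀ (S : Finset (Fin N)) (σ : Fin N → Bool), BddAbove (mixSet x H L Φ S σ))
    (S : Finset (Fin N)) (j : Fin N) (hj : j ∉ S) :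
    ∑ σ : Fin N → Bool, sSup (mixSet x H L Φ S σ)
      ≤ ∑ σ : Fin N → Bool, sSup (mixSet x H L Φ (insert j S) σ) := by
  classical
  set flip : (Fin N → Bool) → (Fin N → Bool) := fun σ i => if i = j then !σ i else σ i with hflip
  have hinv : Function.Involutive flip := by
    intro σ; funext i; by_cases h : i = j <;> simp [hflip, h]
  have hsum : ∀ F : (Fin N → Bool) → ℝ, ∑ σ, F (flip σ) = ∑ σ, F σ := by
    intro F
    exact Fintype.sum_equiv hinv.toPerm _ _ (fun σ => rfl)
  have pair : ∀ σ : Fin N → Bool,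
      sSup (mixSet x H L Φ S σ) + sSup (mixSet x H L Φ S (flip σ))
      ≤ sSup (mixSet x H L Φ (insert j S) σ) + sSup (mixSet x H L Φ (insert j S) (flip σ)) := by
    intro σ
    set a : ((Fin n → ℝ) → ℝ) → ℝ := fun h => ∑ i ∈ univ.erase j,
      (if σ i then (1:ℝ) else -1) * (if i ∈ S then L * h (x i) else Φ i (h (x i))) with ha
    set u : ((Fin n → ℝ) → ℝ) → ℝ := fun h => h (x j) with hu
    have herase : ∀ h : (Fin n → ℝ) → ℝ, ∀ T : Finset (Fin N),
        ∑ i ∈ univ.erase j, (if flip σ i then (1:ℝ) else -1) *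
          (if i ∈ T then L * h (x i) else Φ i (h (x i)))
        = ∑ i ∈ univ.erase j, (if σ i then (1:ℝ) else -1) *
          (if i ∈ T then L * h (x i) else Φ i (h (x i))) := by
      intro h T
      apply Finset.sum_congr rfl
      intro i hi
      have hne : i ≠ j := (Finset.mem_erase.mp hi).1
      simp [hflip, hne]
    have heraseS' : ∀ h : (Fin n → ℝ) → ℝ, ∀ τ : Fin N → Bool,
        ∑ i ∈ univ.erase j, (if τ i then (1:ℝ) else -1) *
          (if i ∈ insert j S then L * h (x i) else Φ i (h (x i)))
        = ∑ i ∈ univ.erase j, (if τ i then (1:ℝ) else -1) *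
          (if i ∈ S then L * h (x i) else Φ i (h (x i))) := by
      intro h τ
      apply Finset.sum_congr rfl
      intro i hi
      have hne : i ≠ j := (Finset.mem_erase.mp hi).1
      simp [Finset.mem_insert, hne]
    cases hσj : σ j
    · -- σ j = false
      have e1 : mixSet x H L Φ S σ = {r : ℝ | ∃ h ∈ H, r = a h - Φ j (u h)} := by
        unfold mixSet
        apply setOf_eq_of_forall
        intro h hh
        rw [← Finset.sum_erase_add Finset.univ _ (Finset.mem_univ j)]
        simp only [ha, hu, hσj, hj, if_false, Bool.false_eq_true]
        ring
      have e2 : mixSet x H L Φ S (flip σ) = {r : ℝ | ∃ h ∈ H, r = a h + Φ j (u h)} := by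
        unfold mixSet
        apply setOf_eq_of_forall
        intro h hh
        rw [← Finset.sum_erase_add Finset.univ _ (Finset.mem_univ j), herase h S]
        have hfj : flip σ j = true := by simp [hflip, hσj]
        simp only [ha, hu, hfj, hj, if_true, if_false, one_mul]
      have e3 : mixSet x H L Φ (insert j S) σ = {r : ℝ | ∃ h ∈ H, r = a h - L * u h} := by
        unfold mixSet
        apply setOf_eq_of_forall
        intro h hh
        rw [← Finset.sum_erase_add Finset.univ _ (Finset.mem_univ j), heraseS' h σ]
        simp only [ha, hu, hσj, Finset.mem_insert_self, if_true, Bool.false_eq_true, if_false]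
        ring
      have e4 : mixSet x H L Φ (insert j S) (flip σ) = {r : ℝ | ∃ h ∈ H, r = a h + L * u h} := by
        unfold mixSet
        apply setOf_eq_of_forall
        intro h hh
        rw [← Finset.sum_erase_add Finset.univ _ (Finset.mem_univ j), heraseS' h (flip σ), herase h S]
        have hfj : flip σ j = true := by simp [hflip, hσj]
        simp only [ha, hu, hfj, Finset.mem_insert_self, if_true, one_mul]
      rw [e1, e2, e3, e4, add_comm (sSup {r : ℝ | ∃ h ∈ H, r = a h - Φ j (u h)}),
        add_comm (sSup {r : ℝ | ∃ h ∈ H, r = a h - L * u h})]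
      exact sup_pair H hH a u L (Φ j) (hΦ j) (e4 ▸ hbdd (insert j S) (flip σ))
        (e3 ▸ hbdd (insert j S) σ)
    · -- σ j = true
      have e1 : mixSet x H L Φ S σ = {r : ℝ | ∃ h ∈ H, r = a h + Φ j (u h)} := by
        unfold mixSet
        apply setOf_eq_of_forall
        intro h hh
        rw [← Finset.sum_erase_add Finset.univ _ (Finset.mem_univ j)]
        simp only [ha, hu, hσj, hj, if_true, if_false, one_mul]
      have e2 : mixSet x H L Φ S (flip σ) = {r : ℝ | ∃ h ∈ H, r = a h - Φ j (u h)} := by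
        unfold mixSet
        apply setOf_eq_of_forall
        intro h hh
        rw [← Finset.sum_erase_add Finset.univ _ (Finset.mem_univ j), herase h S]
        have hfj : flip σ j = false := by simp [hflip, hσj]
        simp only [ha, hu, hfj, hj, Bool.false_eq_true, if_false]
        ring
      have e3 : mixSet x H L Φ (insert j S) σ = {r : ℝ | ∃ h ∈ H, r = a h + L * u h} := by
        unfold mixSet
        apply setOf_eq_of_forall
        intro h hh
        rw [← Finset.sum_erase_add Finset.univ _ (Finset.mem_univ j), heraseS' h σ]
        simp only [ha, hu, hσj, Finset.mem_insert_self, if_true, one_mul]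
      have e4 : mixSet x H L Φ (insert j S) (flip σ) = {r : ℝ | ∃ h ∈ H, r = a h - L * u h} := by
        unfold mixSet
        apply setOf_eq_of_forall
        intro h hh
        rw [← Finset.sum_erase_add Finset.univ _ (Finset.mem_univ j), heraseS' h (flip σ), herase h S]
        have hfj : flip σ j = false := by simp [hflip, hσj]
        simp only [ha, hu, hfj, Finset.mem_insert_self, if_true, Bool.false_eq_true, if_false]
        ring
      rw [e1, e2, e3, e4]
      exact sup_pair H hH a u L (Φ j) (hΦ j) (e3 ▸ hbdd (insert j S) σ)
        (e4 ▸ hbdd (insert j S) (flip σ))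
  have h2 : ∑ σ : Fin N → Bool, (sSup (mixSet x H L Φ S σ) + sSup (mixSet x H L Φ S (flip σ)))
      ≤ ∑ σ : Fin N → Bool, (sSup (mixSet x H L Φ (insert j S) σ)
        + sSup (mixSet x H L Φ (insert j S) (flip σ))) :=
    Finset.sum_le_sum fun σ _ => pair σ
  rw [Finset.sum_add_distrib, Finset.sum_add_distrib,
    hsum (fun σ => sSup (mixSet x H L Φ S σ)),
    hsum (fun σ => sSup (mixSet x H L Φ (insert j S) σ))] at h2
  linarith

lemma mixSet_chain {n N : ℕ} (x : Fin N → (Fin n → ℝ)) (H : Set ((Fin n → ℝ) → ℝ))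
    (hH : H.Nonempty) (L : ℝ) (Φ : Fin N → ℝ → ℝ)
    (hΦ : ∀ i, ∀ a b : ℝ, |Φ i a - Φ i b| ≤ L * |a - b|)
    (hbdd : ∀ (S : Finset (Fin N)) (σ : Fin N → Bool), BddAbove (mixSet x H L Φ S σ))
    (S : Finset (Fin N)) :
    ∑ σ : Fin N → Bool, sSup (mixSet x H L Φ ∅ σ)
      ≤ ∑ σ : Fin N → Bool, sSup (mixSet x H L Φ S σ) := by
  classical
  induction S using Finset.induction_on with
  | empty => exact le_refl _
  | insert _ _ hj ih => exact ih.trans (mixSet_step x H hH L Φ hΦ hbdd _ _ hj)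

/-- Talagrand's contraction lemma: composing a function class `H` with
coordinatewise `L`-Lipschitz functions `Φᵢ` increases the empirical
Rademacher complexity by at most a factor `L`. The Rademacher expectation is
the average over all `2^N` sign vectors. -/
theorem talagrand_contraction
    {n N : ℕ} (x : Fin N → (Fin n → ℝ))
    (H : Set ((Fin n → ℝ) → ℝ)) (hH : H.Nonempty)
    (L : ℝ) (hL : 0 ≤ L)
    (Φ : Fin N → ℝ → ℝ)
    (hΦ : ∀ i, ∀ a b : ℝ, |Φ i a - Φ i b| ≤ L * |a - b|)
    (hA : ∀ σ : Fin N → Bool, BddAbove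
      {r : ℝ | ∃ h ∈ H, r = ∑ i, (if σ i then (1 : ℝ) else -1) * Φ i (h (x i))})
    (hB : ∀ σ : Fin N → Bool, BddAbove
      {r : ℝ | ∃ h ∈ H, r = (1 / N) * ∑ i, (if σ i then (1 : ℝ) else -1) * h (x i)}) :
    (1 / N) * ((∑ σ : Fin N → Bool, sSup {r : ℝ | ∃ h ∈ H, r =
        ∑ i, (if σ i then (1 : ℝ) else -1) * Φ i (h (x i))}) / 2 ^ N)
      ≤ L * ((∑ σ : Fin N → Bool, sSup {r : ℝ | ∃ h ∈ H, r =
        (1 / N) * ∑ i, (if σ i then (1 : ℝ) else -1) * h (x i)}) / 2 ^ N) := by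
  classical
  obtain ⟨h₀, hh₀⟩ := hH
  rcases Nat.eq_zero_or_pos N with rfl | hN
  · -- trivial case N = 0
    have hset : ∀ σ : Fin 0 → Bool, {r : ℝ | ∃ h ∈ H, r =
        (1 / ((0:ℕ):ℝ)) * ∑ i : Fin 0, (if σ i then (1 : ℝ) else -1) * h (x i)} = {0} := by
      intro σ
      ext r
      simp only [Set.mem_setOf_eq, Set.mem_singleton_iff, Finset.univ_eq_empty,
        Finset.sum_empty, mul_zero]
      exact ⟨fun ⟨h, _, e⟩ => e, fun e => ⟨h₀, hh₀, e⟩⟩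
    simp only [hset, csSup_singleton, Finset.sum_const_zero]
    norm_num
  · have hNR : ((N:ℝ)) ≠ 0 := by positivity
    have hbdd : ∀ (S : Finset (Fin N)) (σ : Fin N → Bool), BddAbove (mixSet x H L Φ S σ) :=
      mixSet_bdd x H L hL Φ hΦ hN hB
    -- identify the LHS sets with mixSet ∅
    have eL : ∀ σ : Fin N → Bool, {r : ℝ | ∃ h ∈ H, r =
        ∑ i, (if σ i then (1 : ℝ) else -1) * Φ i (h (x i))} = mixSet x H L Φ ∅ σ := by
      intro σ
      unfold mixSet
      apply setOf_eq_of_forall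
      intro h hh
      simp
    -- identify the univ mixSet sup with (L*N) * sSup B
    have eR : ∀ σ : Fin N → Bool, sSup (mixSet x H L Φ Finset.univ σ)
        = (L * N) * sSup {r : ℝ | ∃ h ∈ H, r =
          (1 / N) * ∑ i, (if σ i then (1 : ℝ) else -1) * h (x i)} := by
      intro σ
      have hkey : ∀ h : (Fin n → ℝ) → ℝ,
          ∑ i, (if σ i then (1 : ℝ) else -1) * (L * h (x i))
          = (L * N) * ((1 / N) * ∑ i, (if σ i then (1 : ℝ) else -1) * h (x i)) := by
        intro h
        have h1 : ∑ i, (if σ i then (1 : ℝ) else -1) * (L * h (x i))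
            = L * ∑ i, (if σ i then (1 : ℝ) else -1) * h (x i) := by
          rw [Finset.mul_sum]
          exact Finset.sum_congr rfl fun i _ => by ring
        rw [h1]
        field_simp
      have hsets : mixSet x H L Φ Finset.univ σ
          = {r : ℝ | ∃ s ∈ {r : ℝ | ∃ h ∈ H, r =
              (1 / (N:ℝ)) * ∑ i, (if σ i then (1 : ℝ) else -1) * h (x i)}, r = (L * N) * s} := by
        ext r
        constructor
        · rintro ⟨h, hh, rfl⟩
          refine ⟨(1 / (N:ℝ)) * ∑ i, (if σ i then (1 : ℝ) else -1) * h (x i), ⟨h, hh, rfl⟩, ?_⟩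
          simp only [Finset.mem_univ, if_true]
          exact hkey h
        · rintro ⟨s, ⟨h, hh, rfl⟩, rfl⟩
          refine ⟨h, hh, ?_⟩
          simp only [Finset.mem_univ, if_true]
          exact (hkey h).symm
      rw [hsets]
      exact sSup_scale (L * N) (by positivity) _ ⟨_, h₀, hh₀, rfl⟩ (hB σ)
    have hchain := mixSet_chain x H ⟨h₀, hh₀⟩ L Φ hΦ hbdd Finset.univ
    simp only [eL]
    calc (1 / (N:ℝ)) * ((∑ σ : Fin N → Bool, sSup (mixSet x H L Φ ∅ σ)) / 2 ^ N)
        ≤ (1 / (N:ℝ)) * ((∑ σ : Fin N → Bool, sSup (mixSet x H L Φ Finset.univ σ)) / 2 ^ N) := by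
          gcongr
      _ = (1 / (N:ℝ)) * ((∑ σ : Fin N → Bool, (L * N) * sSup {r : ℝ | ∃ h ∈ H, r =
            (1 / N) * ∑ i, (if σ i then (1 : ℝ) else -1) * h (x i)}) / 2 ^ N) := by
          simp only [eR]
      _ = L * ((∑ σ : Fin N → Bool, sSup {r : ℝ | ∃ h ∈ H, r =
            (1 / N) * ∑ i, (if σ i then (1 : ℝ) else -1) * h (x i)}) / 2 ^ N) := by
          rw [← Finset.mul_sum]
          field_simp
          try ring
end

section
/- (Symmetrization.) Let μ be a probability measure on a measurable space α, let G be a finite nonempty family of bounded measurable functions g : α → ℝ, and let N be a positive integer. Then E_{S∼μ^N}[sup_{g∈G} (E_μ[g] − (1/N) Σ_{i=1}^N g(X_i))] ≤ 2·E_{S∼μ^N}[E_σ[sup_{g∈G} (1/N) Σ_{i=1}^N σ_i g(X_i)]], where S = (X_1, …, X_N) is an i.i.d. sample from μ and σ = (σ_1, …, σ_N) is uniformly distributed on {−1,+1}^N independently of S. -/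
open MeasureTheory

lemma symm_bdd_integrable {β : Type*} [MeasurableSpace β] (ρ : Measure β) [IsFiniteMeasure ρ]
    {f : β → ℝ} (hf : Measurable f) {C : ℝ} (h : ∀ x, |f x| ≤ C) : Integrable f ρ :=
  (integrable_const C).mono' hf.aestronglyMeasurable
    (Filter.Eventually.of_forall fun x => by simpa [Real.norm_eq_abs] using h x)

lemma symm_abs_sup'_le {ι : Type*} (G : Finset ι) (hG : G.Nonempty) (f : ι → ℝ) {C : ℝ}
    (h : ∀ g ∈ G, |f g| ≤ C) : |G.sup' hG f| ≤ C := by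
  obtain ⟨g₀, hg₀⟩ := hG
  rw [abs_le]
  exact ⟨le_trans (abs_le.1 (h g₀ hg₀)).1 (Finset.le_sup' f hg₀),
    Finset.sup'_le _ _ fun g hg => (abs_le.1 (h g hg)).2⟩

lemma symm_measurable_sup' {ι β : Type*} [MeasurableSpace β] (G : Finset ι) (hG : G.Nonempty)
    (f : ι → β → ℝ) (hf : ∀ g ∈ G, Measurable (f g)) :
    Measurable fun b => G.sup' hG fun g => f g b := by
  have h := Finset.measurable_sup' hG hf
  have : (fun b => G.sup' hG fun g => f g b) = G.sup' hG f := by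
    funext b; exact (Finset.sup'_apply hG f b).symm
  rwa [this]

lemma symm_eval_measurePreserving {α : Type*} [MeasurableSpace α] (μ : Measure α)
    [IsProbabilityMeasure μ] (N : ℕ) (i : Fin N) :
    MeasurePreserving (fun X : Fin N → α => X i) (Measure.pi fun _ : Fin N => μ) μ := by
  refine ⟨measurable_pi_apply i, ?_⟩
  apply Measure.ext
  intro s hs
  rw [Measure.map_apply (measurable_pi_apply i) hs]
  have hp : (fun X : Fin N → α => X i) ⁻¹' s
      = Set.pi Set.univ (Function.update (fun _ : Fin N => (Set.univ : Set α)) i s) :=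
    Set.eval_preimage
  rw [hp, Measure.pi_pi]
  rw [Finset.prod_eq_single i (fun j _ hj => by rw [Function.update_of_ne hj]; exact measure_univ)
    (by simp)]
  rw [Function.update_self]

/-- Symmetrization: the expected uniform deviation of the empirical loss from
the population loss over a finite nonempty family `G` of bounded measurable
functions is at most twice the expected empirical Rademacher complexity of
`G`, where the Rademacher expectation is the average over all `2^N` sign
vectors. -/
theorem symmetrization
    {α : Type*} [MeasurableSpace α] (μ : Measure α) [IsProbabilityMeasure μ]
    (G : Finset (α → ℝ)) (hG : G.Nonempty)
    (hmeas : ∀ g ∈ G, Measurable g)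
    (hbdd : ∀ g ∈ G, ∃ C : ℝ, ∀ x, |g x| ≤ C)
    (N : ℕ) (hN : 0 < N) :
    (∫ X : Fin N → α, (G.sup' hG fun g => (∫ a, g a ∂μ) - (1 / N) * ∑ i, g (X i))
        ∂(Measure.pi fun _ : Fin N => μ))
      ≤ 2 * ∫ X : Fin N → α, (∑ σ : Fin N → Bool, G.sup' hG fun g =>
            (1 / N) * ∑ i, (if σ i then (1 : ℝ) else -1) * g (X i)) / 2 ^ N
          ∂(Measure.pi fun _ : Fin N => μ) := by
  classical
  -- basic setup
  set ν : Measure (Fin N → α) := Measure.pi fun _ : Fin N => μ with hνdef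
  set π : Measure (Fin N → α × α) := Measure.pi fun _ : Fin N => μ.prod μ with hπdef
  have hNR : (N : ℝ) ≠ 0 := Nat.cast_ne_zero.2 hN.ne'
  -- α is nonempty
  have hα : Nonempty α := by
    by_contra h
    have h0 : (Set.univ : Set α) = ∅ := by
      ext x; exact absurd ⟨x⟩ h
    have h1 := measure_univ (μ := μ)
    rw [h0, measure_empty] at h1
    exact zero_ne_one h1
  obtain ⟨x₀⟩ := hα
  -- uniform bound C
  have hbdd' : ∀ g : α → ℝ, ∃ C, ∀ x, g ∈ G → |g x| ≤ C := by
    intro g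
    by_cases h : g ∈ G
    · obtain ⟨C, hC⟩ := hbdd g h
      exact ⟨C, fun x _ => hC x⟩
    · exact ⟨0, fun x hx => absurd hx h⟩
  choose C0 hC0 using hbdd'
  set C : ℝ := G.sup' hG C0 with hCdef
  have hC : ∀ g ∈ G, ∀ x, |g x| ≤ C := fun g hg x =>
    le_trans (hC0 g x hg) (Finset.le_sup' C0 hg)
  have hC0' : 0 ≤ C := by
    obtain ⟨g₀, hg₀⟩ := hG
    exact le_trans (abs_nonneg _) (hC g₀ hg₀ x₀)
  -- bound on averaged sums
  have habs_sum : ∀ (v : Fin N → ℝ), (∀ i, |v i| ≤ C) → |(1 / (N:ℝ)) * ∑ i, v i| ≤ C := by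
    intro v hv
    have h1 : |∑ i, v i| ≤ (N:ℝ) * C := by
      calc |∑ i, v i| ≤ ∑ i, |v i| := Finset.abs_sum_le_sum_abs _ _
        _ ≤ ∑ _i : Fin N, C := Finset.sum_le_sum fun i _ => hv i
        _ = (N:ℝ) * C := by simp [Finset.sum_const, Finset.card_univ, nsmul_eq_mul]
    rw [abs_mul, abs_of_nonneg (a := (1/(N:ℝ))) (by positivity)]
    calc (1/(N:ℝ)) * |∑ i, v i| ≤ (1/(N:ℝ)) * ((N:ℝ) * C) := by
          exact mul_le_mul_of_nonneg_left h1 (by positivity)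
      _ = C := by field_simp
  -- signs
  set ε : (Fin N → Bool) → Fin N → ℝ := fun σ i => if σ i then 1 else -1 with hεdef
  have hε1 : ∀ σ i, |ε σ i| = 1 := by
    intro σ i; by_cases h : σ i <;> simp [hεdef, h]
  -- the key pointwise families
  set ρ : (Fin N → Bool) → (Fin N → α) → ℝ :=
    fun σ X => G.sup' hG fun g => (1 / N) * ∑ i, ε σ i * g (X i) with hρdef
  -- measurability and integrability of ρ σ
  have hρ_meas : ∀ σ, Measurable (ρ σ) := by
    intro σ
    apply symm_measurable_sup'
    intro g hg
    exact measurable_const.mul <| Finset.measurable_sum _ fun i _ =>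
      measurable_const.mul ((hmeas g hg).comp (measurable_pi_apply i))
  have hρ_bd : ∀ σ X, |ρ σ X| ≤ C := by
    intro σ X
    apply symm_abs_sup'_le
    intro g hg
    exact habs_sum _ fun i => by
      rw [abs_mul, hε1 σ i, one_mul]; exact hC g hg _
  have hρ_int : ∀ σ, Integrable (ρ σ) ν := fun σ =>
    symm_bdd_integrable ν (hρ_meas σ) (hρ_bd σ)
  set R : (Fin N → Bool) → ℝ := fun σ => ∫ X, ρ σ X ∂ν with hRdef
  -- empirical mean integral over ghost sample
  have hg_eval_int : ∀ g ∈ G, ∀ i : Fin N, Integrable (fun X : Fin N → α => g (X i)) ν :=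
    fun g hg i => symm_bdd_integrable ν ((hmeas g hg).comp (measurable_pi_apply i))
      (fun X => hC g hg _)
  have hEmpInt : ∀ g ∈ G, (∫ X' : Fin N → α, (1 / (N:ℝ)) * ∑ i, g (X' i) ∂ν) = ∫ a, g a ∂μ := by
    intro g hg
    rw [integral_const_mul, integral_finset_sum _ (fun i _ => hg_eval_int g hg i)]
    have h1 : ∀ i : Fin N, (∫ X' : Fin N → α, g (X' i) ∂ν) = ∫ a, g a ∂μ := by
      intro i
      have h := symm_eval_measurePreserving μ N i
      rw [← h.map_eq, integral_map h.measurable.aemeasurable]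
      exact (hmeas g hg).aestronglyMeasurable
    simp only [h1, Finset.sum_const, Finset.card_univ, Fintype.card_fin, nsmul_eq_mul]
    field_simp
  -- the deviation function
  set f0 : (Fin N → α) → ℝ :=
    fun X => G.sup' hG fun g => (∫ a, g a ∂μ) - (1 / N) * ∑ i, g (X i) with hf0def
  have hE_bd : ∀ g ∈ G, |∫ a, g a ∂μ| ≤ C := by
    intro g hg
    have h := norm_integral_le_of_norm_le_const (μ := μ) (f := g) (C := C)
      (Filter.Eventually.of_forall fun x => by simpa [Real.norm_eq_abs] using hC g hg x)
    simpa [Real.norm_eq_abs, measure_univ] using h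
  have hEmp_bd : ∀ g ∈ G, ∀ X : Fin N → α, |(1 / (N:ℝ)) * ∑ i, g (X i)| ≤ C :=
    fun g hg X => habs_sum _ fun i => hC g hg _
  have hf0_meas : Measurable f0 := by
    apply symm_measurable_sup'
    intro g hg
    exact measurable_const.sub (measurable_const.mul
      (Finset.measurable_sum _ fun i _ => (hmeas g hg).comp (measurable_pi_apply i)))
  have hf0_bd : ∀ X, |f0 X| ≤ C + C := by
    intro X
    apply symm_abs_sup'_le
    intro g hg
    exact (abs_sub _ _).trans (add_le_add (hE_bd g hg) (hEmp_bd g hg X))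
  have hf0_int : Integrable f0 ν := symm_bdd_integrable ν hf0_meas hf0_bd
  -- the two-sample deviation function
  set ψ : (Fin N → α) × (Fin N → α) → ℝ :=
    fun p => G.sup' hG fun g =>
      ((1 / N) * ∑ i, g (p.2 i)) - ((1 / N) * ∑ i, g (p.1 i)) with hψdef
  have hψ_meas : Measurable ψ := by
    apply symm_measurable_sup'
    intro g hg
    exact ((measurable_const.mul (Finset.measurable_sum _ fun i _ =>
        (hmeas g hg).comp ((measurable_pi_apply i).comp measurable_snd))).sub
      (measurable_const.mul (Finset.measurable_sum _ fun i _ =>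
        (hmeas g hg).comp ((measurable_pi_apply i).comp measurable_fst))))
  have hψ_bd : ∀ p, |ψ p| ≤ C + C := by
    intro p
    apply symm_abs_sup'_le
    intro g hg
    exact (abs_sub _ _).trans (add_le_add (hEmp_bd g hg p.2) (hEmp_bd g hg p.1))
  have hψ_int : Integrable ψ (ν.prod ν) := symm_bdd_integrable _ hψ_meas hψ_bd
  -- pointwise ghost-sample (Jensen) step
  have stepA : ∀ X, f0 X ≤ ∫ X', ψ (X, X') ∂ν := by
    intro X
    rw [hf0def]
    apply Finset.sup'_le
    intro g hg
    have hint1 : Integrable (fun X' : Fin N → α =>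
        ((1 / (N:ℝ)) * ∑ i, g (X' i)) - ((1 / (N:ℝ)) * ∑ i, g (X i))) ν := by
      refine Integrable.sub ?_ (integrable_const _)
      exact symm_bdd_integrable ν (measurable_const.mul
        (Finset.measurable_sum _ fun i _ => (hmeas g hg).comp (measurable_pi_apply i)))
        (fun X' => hEmp_bd g hg X')
    have hint2 : Integrable (fun X' => ψ (X, X')) ν :=
      symm_bdd_integrable ν (hψ_meas.comp (measurable_const.prodMk measurable_id))
        (fun X' => hψ_bd _)
    have hint0 : Integrable (fun X' : Fin N → α => (1 / (N:ℝ)) * ∑ i, g (X' i)) ν :=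
      symm_bdd_integrable ν (measurable_const.mul
        (Finset.measurable_sum _ fun i _ => (hmeas g hg).comp (measurable_pi_apply i)))
        (fun X' => hEmp_bd g hg X')
    have heq : (∫ a, g a ∂μ) - (1 / (N:ℝ)) * ∑ i, g (X i)
        = ∫ X', (((1 / (N:ℝ)) * ∑ i, g (X' i)) - ((1 / (N:ℝ)) * ∑ i, g (X i))) ∂ν := by
      rw [integral_sub hint0 (integrable_const _), hEmpInt g hg, integral_const]
      simp [measure_univ]
    rw [heq]
    refine integral_mono hint1 hint2 ?_
    intro X'
    rw [hψdef]
    exact Finset.le_sup' (fun g => ((1 / (N:ℝ)) * ∑ i, g (X' i))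
      - ((1 / (N:ℝ)) * ∑ i, g (X i))) hg
  -- integrate the ghost-sample step
  have hintint : Integrable (fun X => ∫ X', ψ (X, X') ∂ν) ν := hψ_int.integral_prod_left
  have stepB : (∫ X, f0 X ∂ν) ≤ ∫ p, ψ p ∂(ν.prod ν) := by
    calc ∫ X, f0 X ∂ν ≤ ∫ X, (∫ X', ψ (X, X') ∂ν) ∂ν := integral_mono hf0_int hintint stepA
      _ = ∫ p, ψ p ∂(ν.prod ν) := by
          rw [integral_integral (f := fun X X' => ψ (X, X')) hψ_int]
  -- move to the pi space of pairs
  set e := MeasurableEquiv.arrowProdEquivProdArrow α α (Fin N) with hedef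
  have he : MeasurePreserving e π (ν.prod ν) :=
    measurePreserving_arrowProdEquivProdArrow α α (Fin N) (fun _ => μ) (fun _ => μ)
  set Fw : (Fin N → α × α) → ℝ :=
    fun w => G.sup' hG fun g =>
      ((1 / N) * ∑ i, g ((w i).2)) - ((1 / N) * ∑ i, g ((w i).1)) with hFwdef
  have hFe : ∀ w, ψ (e w) = Fw w := fun w => rfl
  have stepC : (∫ p, ψ p ∂(ν.prod ν)) = ∫ w, Fw w ∂π := by
    rw [← he.map_eq, integral_map he.measurable.aemeasurable hψ_meas.aestronglyMeasurable]
    exact integral_congr_ae (Filter.Eventually.of_forall fun w => hFe w)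
  have hFw_meas : Measurable Fw := by
    apply symm_measurable_sup'
    intro g hg
    exact ((measurable_const.mul (Finset.measurable_sum _ fun i _ =>
        (hmeas g hg).comp (measurable_snd.comp (measurable_pi_apply i)))).sub
      (measurable_const.mul (Finset.measurable_sum _ fun i _ =>
        (hmeas g hg).comp (measurable_fst.comp (measurable_pi_apply i)))))
  have hFw_bd : ∀ w, |Fw w| ≤ C + C := by
    intro w
    apply symm_abs_sup'_le
    intro g hg
    refine (abs_sub _ _).trans (add_le_add ?_ ?_)
    · exact habs_sum _ fun i => hC g hg _
    · exact habs_sum _ fun i => hC g hg _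
  have hFw_int : Integrable Fw π := symm_bdd_integrable π hFw_meas hFw_bd
  -- sign-flip maps
  have hT : ∀ σ : Fin N → Bool, MeasurePreserving
      (fun w : Fin N → α × α => fun i => if σ i then w i else (w i).swap) π π := by
    intro σ
    have h := measurePreserving_pi (fun _ : Fin N => μ.prod μ) (fun _ : Fin N => μ.prod μ)
      (f := fun i (p : α × α) => if σ i then p else p.swap) (fun i => ?_)
    · exact h
    · by_cases hσ : σ i
      · convert MeasurePreserving.id (μ.prod μ) using 1
        funext p; simp [hσ]
      · simpa [hσ] using Measure.measurePreserving_swap (μ := μ) (ν := μ)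
  have hFT : ∀ σ : Fin N → Bool, (∫ w, Fw w ∂π)
      = ∫ w, Fw (fun i => if σ i then w i else (w i).swap) ∂π := by
    intro σ
    calc ∫ w, Fw w ∂π
        = ∫ w, Fw w ∂(Measure.map (fun w : Fin N → α × α =>
            fun i => if σ i then w i else (w i).swap) π) := by rw [(hT σ).map_eq]
      _ = ∫ w, Fw (fun i => if σ i then w i else (w i).swap) ∂π :=
          integral_map (hT σ).measurable.aemeasurable hFw_meas.aestronglyMeasurable
  -- one-sided Rademacher functions on the pair space
  set ρ2 : (Fin N → Bool) → (Fin N → α × α) → ℝ :=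
    fun σ w => G.sup' hG fun g => (1 / N) * ∑ i, ε σ i * g ((w i).2) with hρ2def
  set ρ1 : (Fin N → Bool) → (Fin N → α × α) → ℝ :=
    fun σ w => G.sup' hG fun g => (1 / N) * ∑ i, ε σ i * g ((w i).1) with hρ1def
  have hρ2_meas : ∀ σ, Measurable (ρ2 σ) := by
    intro σ
    apply symm_measurable_sup'
    intro g hg
    exact measurable_const.mul (Finset.measurable_sum _ fun i _ =>
      measurable_const.mul ((hmeas g hg).comp (measurable_snd.comp (measurable_pi_apply i))))
  have hρ1_meas : ∀ σ, Measurable (ρ1 σ) := by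
    intro σ
    apply symm_measurable_sup'
    intro g hg
    exact measurable_const.mul (Finset.measurable_sum _ fun i _ =>
      measurable_const.mul ((hmeas g hg).comp (measurable_fst.comp (measurable_pi_apply i))))
  have hρ2_bd : ∀ σ w, |ρ2 σ w| ≤ C := by
    intro σ w
    apply symm_abs_sup'_le
    intro g hg
    exact habs_sum _ fun i => by rw [abs_mul, hε1 σ i, one_mul]; exact hC g hg _
  have hρ1_bd : ∀ σ w, |ρ1 σ w| ≤ C := by
    intro σ w
    apply symm_abs_sup'_le
    intro g hg
    exact habs_sum _ fun i => by rw [abs_mul, hε1 σ i, one_mul]; exact hC g hg _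
  have hρ2_int : ∀ σ, Integrable (ρ2 σ) π := fun σ =>
    symm_bdd_integrable π (hρ2_meas σ) (hρ2_bd σ)
  have hρ1_int : ∀ σ, Integrable (ρ1 σ) π := fun σ =>
    symm_bdd_integrable π (hρ1_meas σ) (hρ1_bd σ)
  -- pointwise bound after sign flip
  have hpoint : ∀ (σ : Fin N → Bool) w,
      Fw (fun i => if σ i then w i else (w i).swap)
        ≤ ρ2 σ w + ρ1 (fun i => !(σ i)) w := by
    intro σ w
    rw [hFwdef]
    apply Finset.sup'_le
    intro g hg
    have hterm : ((1 / (N:ℝ)) * ∑ i, g ((if σ i then w i else (w i).swap).2))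
        - ((1 / (N:ℝ)) * ∑ i, g ((if σ i then w i else (w i).swap).1))
        = ((1 / (N:ℝ)) * ∑ i, ε σ i * g ((w i).2))
          + ((1 / (N:ℝ)) * ∑ i, ε (fun i => !(σ i)) i * g ((w i).1)) := by
      rw [← mul_sub, ← mul_add, ← Finset.sum_sub_distrib, ← Finset.sum_add_distrib]
      congr 1
      apply Finset.sum_congr rfl
      intro i _
      by_cases h : σ i <;> simp [hεdef, h, Prod.swap] <;> ring
    rw [hterm]
    simp only [hρ2def, hρ1def]
    exact add_le_add
      (Finset.le_sup' (fun g : α → ℝ => (1/(N:ℝ)) * ∑ i, ε σ i * g ((w i).2)) hg)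
      (Finset.le_sup' (fun g : α → ℝ => (1/(N:ℝ)) * ∑ i, ε (fun i => !(σ i)) i * g ((w i).1)) hg)
  -- marginals of the pair space
  have hsndMP : MeasurePreserving (fun w : Fin N → α × α => fun i => (w i).2) π ν :=
    measurePreserving_pi _ _ (fun i => ⟨measurable_snd, by simp⟩)
  have hfstMP : MeasurePreserving (fun w : Fin N → α × α => fun i => (w i).1) π ν :=
    measurePreserving_pi _ _ (fun i => ⟨measurable_fst, by simp⟩)
  have hρ2R : ∀ σ, (∫ w, ρ2 σ w ∂π) = R σ := by
    intro σ
    have h2 : (∫ X, ρ σ X ∂(Measure.map (fun w : Fin N → α × α => fun i => (w i).2) π))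
        = ∫ w, ρ σ (fun i => (w i).2) ∂π :=
      integral_map hsndMP.measurable.aemeasurable (hρ_meas σ).aestronglyMeasurable
    rw [hRdef]
    show (∫ w, ρ2 σ w ∂π) = ∫ X, ρ σ X ∂ν
    rw [← hsndMP.map_eq, h2]
  have hρ1R : ∀ σ, (∫ w, ρ1 σ w ∂π) = R σ := by
    intro σ
    have h2 : (∫ X, ρ σ X ∂(Measure.map (fun w : Fin N → α × α => fun i => (w i).1) π))
        = ∫ w, ρ σ (fun i => (w i).1) ∂π :=
      integral_map hfstMP.measurable.aemeasurable (hρ_meas σ).aestronglyMeasurable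
    rw [hRdef]
    show (∫ w, ρ1 σ w ∂π) = ∫ X, ρ σ X ∂ν
    rw [← hfstMP.map_eq, h2]
  -- each sign pattern gives the same bound
  have h1 : ∀ σ : Fin N → Bool, (∫ w, Fw w ∂π) ≤ R σ + R (fun i => !(σ i)) := by
    intro σ
    rw [hFT σ]
    calc ∫ w, Fw (fun i => if σ i then w i else (w i).swap) ∂π
        ≤ ∫ w, (ρ2 σ w + ρ1 (fun i => !(σ i)) w) ∂π := by
          refine integral_mono ?_ ((hρ2_int σ).add (hρ1_int _)) (hpoint σ)
          exact symm_bdd_integrable π (hFw_meas.comp (hT σ).measurable)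
            (fun w => hFw_bd _)
      _ = (∫ w, ρ2 σ w ∂π) + ∫ w, ρ1 (fun i => !(σ i)) w ∂π :=
          integral_add (hρ2_int σ) (hρ1_int _)
      _ = R σ + R (fun i => !(σ i)) := by rw [hρ2R σ, hρ1R]
  -- sum over sign patterns
  have hbarsum : (∑ σ : Fin N → Bool, R (fun i => !(σ i))) = ∑ σ : Fin N → Bool, R σ := by
    refine Fintype.sum_bijective (fun σ : Fin N → Bool => fun i => !(σ i))
      (Function.Involutive.bijective fun σ => by funext i; simp) _ _ (fun σ => rfl)
  have hcard : ((2:ℝ) ^ N) = (Fintype.card (Fin N → Bool) : ℝ) := by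
    simp [Fintype.card_fun]
  have hsum : ((2:ℝ) ^ N) * (∫ w, Fw w ∂π) ≤ 2 * ∑ σ : Fin N → Bool, R σ := by
    calc ((2:ℝ) ^ N) * (∫ w, Fw w ∂π)
        = ∑ _σ : Fin N → Bool, (∫ w, Fw w ∂π) := by
          rw [Finset.sum_const, Finset.card_univ, nsmul_eq_mul, hcard]
      _ ≤ ∑ σ : Fin N → Bool, (R σ + R (fun i => !(σ i))) :=
          Finset.sum_le_sum fun σ _ => h1 σ
      _ = (∑ σ : Fin N → Bool, R σ) + ∑ σ : Fin N → Bool, R (fun i => !(σ i)) :=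
          Finset.sum_add_distrib
      _ = 2 * ∑ σ : Fin N → Bool, R σ := by rw [hbarsum]; ring
  have hF_le : (∫ w, Fw w ∂π) ≤ 2 * (∑ σ : Fin N → Bool, R σ) / 2 ^ N := by
    rw [le_div_iff₀ (by positivity : (0:ℝ) < 2 ^ N)]
    calc (∫ w, Fw w ∂π) * 2 ^ N = (2:ℝ) ^ N * ∫ w, Fw w ∂π := by ring
      _ ≤ 2 * ∑ σ : Fin N → Bool, R σ := hsum
  -- identify the right-hand side
  have hRHS : (∫ X, (∑ σ : Fin N → Bool, ρ σ X) / 2 ^ N ∂ν)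
      = (∑ σ : Fin N → Bool, R σ) / 2 ^ N := by
    rw [integral_div, integral_finset_sum _ (fun σ _ => hρ_int σ)]
  have hgoal2 : (fun X : Fin N → α => (∑ σ : Fin N → Bool, G.sup' hG fun g =>
        (1 / N) * ∑ i, (if σ i then (1 : ℝ) else -1) * g (X i)) / 2 ^ N)
      = fun X => (∑ σ : Fin N → Bool, ρ σ X) / 2 ^ N := by
    funext X
    simp only [hρdef, hεdef]
  rw [hgoal2]
  calc ∫ X, f0 X ∂ν ≤ ∫ p, ψ p ∂(ν.prod ν) := stepB
    _ = ∫ w, Fw w ∂π := stepC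
    _ ≤ 2 * (∑ σ : Fin N → Bool, R σ) / 2 ^ N := hF_le
    _ = 2 * ((∑ σ : Fin N → Bool, R σ) / 2 ^ N) := by ring
    _ = 2 * ∫ X, (∑ σ : Fin N → Bool, ρ σ X) / 2 ^ N ∂ν := by rw [hRHS]
end
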